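/- The vector φ₀ with φ₀(x) = √(∏_{y=0}^{x-1} B(y)/D(y+1)) satisfies Aφ₀ = 0, where A_{xx} = √(B(x)), A_{x,x+1} = -√(D(x+1)); consequently Hφ₀ = 0 with H = AᵀA, i.e. φ₀ is a zero mode of H. -/

import Mathlib

/-- φ₀ is a zero mode of A, hence of H = A.transposeA. -/
theorem stmt_9 (N : ℕ) (B D : ℕ → ℝ)
    (hB : ∀ x < N, 0 < B x) (hD : ∀ x, 0 < x → x ≤ N → 0 < D x)
    (hD0 : D 0 = 0) (hBN : B N = 0)
    (A : Matrix (Fin (N+1)) (Fin (N+1)) ℝ)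
    (hA : ∀ x y : Fin (N+1), A x y =
      if x = y then Real.sqrt (B x.val)
      else if y.val = x.val + 1 then -Real.sqrt (D y.val) else 0)
    (phi0 : Fin (N+1) → ℝ)
    (hphi : ∀ x : Fin (N+1),
      phi0 x = Real.sqrt (∏ y ∈ Finset.range x.val, B y / D (y+1))) :
    A.mulVec phi0 = 0 ∧ (A.transpose * A).mulVec phi0 = 0 := by
  have h1 : A.mulVec phi0 = 0 := by
    funext x
    simp only [Matrix.mulVec, dotProduct, Pi.zero_apply]
    by_cases hx : x.val < N
    · set x' : Fin (N+1) := ⟨x.val + 1, by omega⟩ with hx'def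
      have hne : x ≠ x' := by
        intro h
        have := congrArg Fin.val h
        simp [hx'def] at this
      rw [Fintype.sum_eq_add x x' hne]
      · have hPnn : 0 ≤ ∏ y ∈ Finset.range x.val, B y / D (y+1) := by
          apply Finset.prod_nonneg
          intro y hy
          rw [Finset.mem_range] at hy
          have hBy := hB y (by omega)
          have hDy := hD (y+1) (by omega) (by omega)
          positivity
        have hDx : 0 < D (x.val + 1) := hD _ (by omega) (by omega)
        have hBx : 0 < B x.val := hB _ hx
        rw [hA x x, hA x x', hphi x, hphi x']
        rw [if_neg hne]
        simp only [if_pos rfl, if_neg hne, hx'def, if_true]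
        simp only [Finset.prod_range_succ]
        rw [Real.sqrt_mul hPnn, Real.sqrt_div hBx.le]
        have hsD : Real.sqrt (D (x.val + 1)) ≠ 0 := by
          positivity
        field_simp
        ring
      · intro c hc
        obtain ⟨hcx, hcx'⟩ := hc
        rw [hA x c]
        rw [if_neg (by exact fun h => hcx h.symm), if_neg (by
          intro h
          apply hcx'
          apply Fin.ext
          simp [hx'def, h])]
        ring_nf
    · have hxN : x.val = N := by omega
      apply Finset.sum_eq_zero
      intro c _
      rw [hA x c]
      by_cases h : x = c
      · rw [if_pos h]
        rw [hxN, hBN, Real.sqrt_zero, zero_mul]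
      · rw [if_neg h, if_neg (by omega)]
        ring_nf
  refine ⟨h1, ?_⟩
  rw [← Matrix.mulVec_mulVec, h1, Matrix.mulVec_zero]
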